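/- For n = 1, the integral over the unit circle of (1−z²)z / [(1−az)(1−bz)(1−cz)(1−dz)(z−c)(z−d)] · dz/(2πi) equals (1−abcd)/[(1−ac)(1−bc)(1−cd)(1−ad)(1−bd)], for parameters a, b, c, d of absolute value less than 1 with c ≠ d. -/

import Mathlib

open Complex Metric

set_option maxHeartbeats 1600000


/-- The `n = 1` base case of the recurrence: by the residue theorem,
`(2πi)⁻¹ ∮_{|z|=1} (1−z²)z/[(1−az)(1−bz)(1−cz)(1−dz)(z−c)(z−d)] dz
  = (1−abcd)/[(1−ac)(1−bc)(1−cd)(1−ad)(1−bd)]`. -/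
theorem base_case_contour_integral (a b c d : ℂ)
    (ha : ‖a‖ < 1) (hb : ‖b‖ < 1) (hc : ‖c‖ < 1) (hd : ‖d‖ < 1) (hcd : c ≠ d) :
    (2 * Real.pi * Complex.I)⁻¹ *
      (∮ z in C((0 : ℂ), 1),
        (1 - z ^ 2) * z /
          ((1 - a * z) * (1 - b * z) * (1 - c * z) * (1 - d * z) * (z - c) * (z - d)))
    = (1 - a * b * c * d) /
        ((1 - a * c) * (1 - b * c) * (1 - c * d) * (1 - a * d) * (1 - b * d)) := by
  have hpi : (2 * (Real.pi : ℂ) * Complex.I) ≠ 0 := by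
    simp [Real.pi_ne_zero, Complex.I_ne_zero]
  have key : ∀ x : ℂ, ‖x‖ < 1 → (1 : ℂ) - x ≠ 0 := by
    intro x hx h
    rw [← sub_eq_zero.mp h] at hx; simp at hx
  have hmul : ∀ x y : ℂ, ‖x‖ < 1 → ‖y‖ < 1 → (1 : ℂ) - x * y ≠ 0 := fun x y hx hy =>
    key _ (by rw [norm_mul]; nlinarith [norm_nonneg x, norm_nonneg y])
  set g : ℂ → ℂ := fun z =>
    (1 - z ^ 2) * z / ((1 - a * z) * (1 - b * z) * (1 - c * z) * (1 - d * z)) with hg_def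
  have hden : ∀ z : ℂ, ‖z‖ ≤ 1 →
      (1 - a * z) * (1 - b * z) * (1 - c * z) * (1 - d * z) ≠ 0 := by
    intro z hz
    have h1 : ∀ x : ℂ, ‖x‖ < 1 → (1 : ℂ) - x * z ≠ 0 := fun x hx =>
      key _ (by rw [norm_mul]; nlinarith [norm_nonneg x, norm_nonneg z])
    exact mul_ne_zero (mul_ne_zero (mul_ne_zero (h1 a ha) (h1 b hb)) (h1 c hc)) (h1 d hd)
  have hgdiff : DifferentiableOn ℂ g (closedBall (0 : ℂ) 1) := by
    intro z hz
    have hz1 : ‖z‖ ≤ 1 := by simpa [mem_closedBall_zero_iff] using hz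
    have h1 : DifferentiableAt ℂ (fun z : ℂ => (1 - z ^ 2) * z) z := by fun_prop
    have h2 : DifferentiableAt ℂ
        (fun z : ℂ => (1 - a * z) * (1 - b * z) * (1 - c * z) * (1 - d * z)) z := by fun_prop
    exact (h1.div h2 (hden z hz1)).differentiableWithinAt
  have hgc : DiffContOnCl ℂ g (ball (0 : ℂ) 1) := by
    apply DifferentiableOn.diffContOnCl
    rwa [closure_ball (0 : ℂ) one_ne_zero]
  have hIc : (∮ z in C((0 : ℂ), 1), (z - c)⁻¹ • g z) = (2 * (Real.pi : ℂ) * Complex.I) • g c :=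
    hgc.circleIntegral_sub_inv_smul (by simpa [mem_ball_zero_iff] using hc)
  have hId : (∮ z in C((0 : ℂ), 1), (z - d)⁻¹ • g z) = (2 * (Real.pi : ℂ) * Complex.I) • g d :=
    hgc.circleIntegral_sub_inv_smul (by simpa [mem_ball_zero_iff] using hd)
  have hcont : ContinuousOn g (sphere (0 : ℂ) 1) := by
    apply (hgdiff.mono sphere_subset_closedBall).continuousOn
  have hint : ∀ w : ℂ, ‖w‖ < 1 → CircleIntegrable (fun z => (z - w)⁻¹ • g z) 0 1 := by
    intro w hw
    apply ContinuousOn.circleIntegrable zero_le_one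
    apply ContinuousOn.fun_smul _ hcont
    apply ContinuousOn.inv₀ (by fun_prop)
    intro z hz
    have : ‖z‖ = 1 := by simpa [mem_sphere_zero_iff_norm] using hz
    intro h
    rw [sub_eq_zero.mp h] at this
    linarith
  have hEq : Set.EqOn (fun z : ℂ =>
      (1 - z ^ 2) * z /
        ((1 - a * z) * (1 - b * z) * (1 - c * z) * (1 - d * z) * (z - c) * (z - d)))
      (fun z => (c - d)⁻¹ • ((z - c)⁻¹ • g z - (z - d)⁻¹ • g z)) (sphere (0 : ℂ) 1) := by
    intro z hz
    have hz1 : ‖z‖ = 1 := by simpa [mem_sphere_zero_iff_norm] using hz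
    have hzc : z - c ≠ 0 := sub_ne_zero.mpr (by intro h; rw [h] at hz1; linarith)
    have hzd : z - d ≠ 0 := sub_ne_zero.mpr (by intro h; rw [h] at hz1; linarith)
    have hD := hden z hz1.le
    have hcd' : c - d ≠ 0 := sub_ne_zero.mpr hcd
    simp only [smul_eq_mul, hg_def]
    field_simp
    ring
  rw [circleIntegral.integral_congr zero_le_one hEq, circleIntegral.integral_smul,
    circleIntegral.integral_sub (hint c hc) (hint d hd), hIc, hId]
  have hsimp : ∀ x : ℂ, ‖x‖ < 1 →
      (1 - x ^ 2) * x / ((1 - a * x) * (1 - b * x) * (1 - x * x) * (1 - d * x))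
        = x / ((1 - a * x) * (1 - b * x) * (1 - d * x)) := by
    intro x hx
    have h1 : (1 : ℂ) - x ^ 2 ≠ 0 := by
      have := hmul x x hx hx; rwa [← sq] at this
    rw [show (1 - x ^ 2) * x = x * (1 - x ^ 2) from mul_comm _ _,
      show (1 - a * x) * (1 - b * x) * (1 - x * x) * (1 - d * x)
        = (1 - a * x) * (1 - b * x) * (1 - d * x) * (1 - x ^ 2) by ring,
      mul_div_mul_right _ _ h1]
  have hgc' : g c = c / ((1 - a * c) * (1 - b * c) * (1 - d * c)) := by
    simp only [hg_def]; exact hsimp c hc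
  have hgd' : g d = d / ((1 - a * d) * (1 - b * d) * (1 - c * d)) := by
    simp only [hg_def]
    rw [show (1 - a * d) * (1 - b * d) * (1 - c * d) * (1 - d * d)
        = (1 - a * d) * (1 - b * d) * (1 - d * d) * (1 - c * d) by ring]
    rw [show (1 - a * d) * (1 - b * d) * (1 - c * d)
        = (1 - a * d) * (1 - b * d) * (1 - c * d) from rfl]
    have := hsimp d hd
    rw [show (1 - a * d) * (1 - b * d) * (1 - d * d) * (1 - c * d)
        = (1 - a * d) * (1 - b * d) * (1 - d * d) * (1 - c * d) from rfl]
    -- reduce to hsimp with c ↔ d roles: just redo directly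
    have h1 : (1 : ℂ) - d ^ 2 ≠ 0 := by
      have := hmul d d hd hd; rwa [← sq] at this
    rw [show (1 - d ^ 2) * d = d * (1 - d ^ 2) from mul_comm _ _,
      show (1 - a * d) * (1 - b * d) * (1 - d * d) * (1 - c * d)
        = (1 - a * d) * (1 - b * d) * (1 - c * d) * (1 - d ^ 2) by ring,
      mul_div_mul_right _ _ h1]
  rw [hgc', hgd']
  have hac := hmul a c ha hc
  have hbc := hmul b c hb hc
  have hdc := hmul d c hd hc
  have had := hmul a d ha hd
  have hbd := hmul b d hb hd
  have hcd2 := hmul c d hc hd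
  have hcmd : c - d ≠ 0 := sub_ne_zero.mpr hcd
  simp only [smul_eq_mul]
  have hX : (1 - a * c) * (1 - b * c) * (1 - d * c) ≠ 0 :=
    mul_ne_zero (mul_ne_zero hac hbc) hdc
  have hY : (1 - a * d) * (1 - b * d) * (1 - c * d) ≠ 0 :=
    mul_ne_zero (mul_ne_zero had hbd) hcd2
  have hZ : (1 - a * c) * (1 - b * c) * (1 - c * d) * (1 - a * d) * (1 - b * d) ≠ 0 :=
    mul_ne_zero (mul_ne_zero (mul_ne_zero (mul_ne_zero hac hbc) hcd2) had) hbd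
  have h2 : ∀ s : ℂ, (2 * (Real.pi : ℂ) * Complex.I)⁻¹ *
      ((c - d)⁻¹ * (2 * (Real.pi : ℂ) * Complex.I * s)) = (c - d)⁻¹ * s := by
    intro s
    rw [mul_left_comm ((c - d)⁻¹), ← mul_assoc, inv_mul_cancel₀ hpi, one_mul]
  rw [← mul_sub (2 * (Real.pi : ℂ) * Complex.I), h2,
    div_sub_div _ _ hX hY, inv_mul_eq_div, div_div,
    div_eq_div_iff (mul_ne_zero (mul_ne_zero hX hY) hcmd) hZ]
  ring
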